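/- For every positive integer d there is a constant C = C(d) > 0 with the following property. Let N be a positive integer and let f(n) = \sum_{i=0}^d \beta_i n^i be a real polynomial of degree at most d, with binomial-basis coefficients \alpha_0, ..., \alpha_d (i.e. f(n) = \sum_{i=0}^d \alpha_i \binom{n}{i} for all integers n). Then there exists an integer D with 1 \le D \le C such that \|D\beta_i\|_{\mathbb{R}/\mathbb{Z}} \le C \cdot N^{-i} \cdot \|f\|_{C^\infty([N])} for every 0 \le i \le d. -/

import Mathlib

open Finset

/-- Distance from a real number to the nearest integer, i.e. `‖x‖_{ℝ/ℤ}`. -/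
noncomputable def distToInt (x : ℝ) : ℝ := |x - round x|

/-- The binomial polynomial `n ↦ n(n-1)⋯(n-i+1)/i!` evaluated at an integer `n`, as a real. -/
noncomputable def binomR (n : ℤ) (i : ℕ) : ℝ :=
  (∏ j ∈ Finset.range i, ((n : ℝ) - (j : ℝ))) / (Nat.factorial i : ℝ)

lemma distToInt_eq_norm (x : ℝ) : distToInt x = ‖(x : UnitAddCircle)‖ := by
  rw [UnitAddCircle.norm_eq, distToInt]

lemma distToInt_nonneg (x : ℝ) : 0 ≤ distToInt x := abs_nonneg _

lemma distToInt_sum_le {ι : Type*} (s : Finset ι) (m : ι → ℤ) (x : ι → ℝ) :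
    distToInt (∑ i ∈ s, (m i : ℝ) * x i) ≤ ∑ i ∈ s, |(m i : ℝ)| * distToInt (x i) := by
  have key : ((∑ i ∈ s, (m i : ℝ) * x i : ℝ) : UnitAddCircle)
      = ∑ i ∈ s, m i • ((x i : ℝ) : UnitAddCircle) := by
    have h := map_sum (QuotientAddGroup.mk' (AddSubgroup.zmultiples (1:ℝ)))
      (fun i => m i • x i) s
    simp only [map_zsmul, QuotientAddGroup.mk'_apply] at h
    simp only [zsmul_eq_mul] at h ⊢
    exact h
  rw [distToInt_eq_norm, key]
  refine (norm_sum_le _ _).trans (Finset.sum_le_sum fun i _ => ?_)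
  refine (norm_zsmul_le _ _).trans ?_
  rw [distToInt_eq_norm, Int.norm_eq_abs]


/-- For every positive integer `d` there is `C = C(d) > 0` such that: for every positive
integer `N` and every real polynomial `f(n) = ∑_{i=0}^d β i * n^i` with binomial-basis
coefficients `α i` (i.e. `f(n) = ∑_{i=0}^d α i * binom(n,i)` for all integers `n`), there is an
integer `D` with `1 ≤ D ≤ C` such that `‖D β i‖_{ℝ/ℤ} ≤ C * N^{-i} * ‖f‖_{C^∞([N])}` for all
`0 ≤ i ≤ d`, where `‖f‖_{C^∞([N])} = max_{0 ≤ i ≤ d} N^i ‖α i‖_{ℝ/ℤ}`. -/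
theorem stmt0 (d : ℕ) (hd : 0 < d) :
    ∃ C : ℝ, 0 < C ∧
      ∀ (N : ℕ), 0 < N → ∀ (β α : ℕ → ℝ),
        (∀ n : ℤ, ∑ i ∈ Finset.range (d + 1), β i * (n : ℝ) ^ i
            = ∑ i ∈ Finset.range (d + 1), α i * binomR n i) →
        ∃ D : ℕ, 1 ≤ D ∧ (D : ℝ) ≤ C ∧
          ∀ i ≤ d,
            distToInt ((D : ℝ) * β i)
              ≤ C * ((N : ℝ) ^ i)⁻¹ *
                (Finset.range (d + 1)).sup'
                  (by simp) (fun i => (N : ℝ) ^ i * distToInt (α i)) := by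
  classical
  set Zp : ℕ → Polynomial ℤ :=
    fun i => ∏ j ∈ Finset.range i, (Polynomial.X - Polynomial.C (j : ℤ)) with hZp
  set M : ℕ → ℕ → ℤ :=
    fun i j => ((d.factorial / i.factorial : ℕ) : ℤ) * (Zp i).coeff j with hMdef
  have hZdeg : ∀ i, (Zp i).natDegree = i := by
    intro i
    rw [hZp]
    rw [Polynomial.natDegree_prod_of_monic _ _ (fun j _ => Polynomial.monic_X_sub_C _)]
    simp only [Polynomial.natDegree_X_sub_C, Finset.sum_const, smul_eq_mul, mul_one,
      Finset.card_range]
  have hMzero : ∀ i j, i < j → M i j = 0 := by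
    intro i j hij
    have : (Zp i).coeff j = 0 :=
      Polynomial.coeff_eq_zero_of_natDegree_lt (by rw [hZdeg]; exact hij)
    simp [hMdef, this]
  set C0 : ℝ := (d.factorial : ℝ) + ∑ i ∈ range (d+1), ∑ j ∈ range (d+1), |(M i j : ℝ)|
    with hC0
  have hfacpos : (0:ℝ) < (d.factorial : ℝ) := by
    exact_mod_cast d.factorial_pos
  have hsumnn : (0:ℝ) ≤ ∑ i ∈ range (d+1), ∑ j ∈ range (d+1), |(M i j : ℝ)| :=
    Finset.sum_nonneg fun i _ => Finset.sum_nonneg fun j _ => abs_nonneg _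
  have hC0pos : 0 < C0 := by rw [hC0]; linarith
  refine ⟨C0, hC0pos, ?_⟩
  intro N hN β α hf
  have key : ∀ j ≤ d, (d.factorial : ℝ) * β j
      = ∑ i ∈ range (d+1), (M i j : ℝ) * α i := by
    intro j hj
    set P : Polynomial ℝ := ∑ i ∈ range (d+1), Polynomial.C (β i) * Polynomial.X ^ i with hP
    set Q : Polynomial ℝ := ∑ i ∈ range (d+1),
      Polynomial.C (α i / (i.factorial : ℝ)) * ((Zp i).map (Int.castRingHom ℝ)) with hQ
    have hPQ : P = Q := by
      have hroot : ∀ n : ℤ, (P - Q).IsRoot (n : ℝ) := by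
        intro n
        have hPe : P.eval (n:ℝ) = ∑ i ∈ range (d+1), β i * (n:ℝ)^i := by
          simp [hP, Polynomial.eval_finset_sum]
        have hQe : Q.eval (n:ℝ) = ∑ i ∈ range (d+1), α i * binomR n i := by
          rw [hQ, Polynomial.eval_finset_sum]
          refine Finset.sum_congr rfl fun i _ => ?_
          rw [Polynomial.eval_mul, Polynomial.eval_C, hZp]
          simp only [Polynomial.map_prod, Polynomial.map_sub, Polynomial.map_X,
            Polynomial.map_C, Polynomial.eval_prod, Polynomial.eval_sub,
            Polynomial.eval_X, Polynomial.eval_C, eq_intCast, Polynomial.map_intCast,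
            Polynomial.eval_intCast]
          rw [binomR]
          push_cast
          ring
        simp only [Polynomial.IsRoot, Polynomial.eval_sub, hPe, hQe, hf n, sub_self]
      have hsub : P - Q = 0 := by
        apply Polynomial.eq_zero_of_infinite_isRoot
        have hsubset : Set.range (Int.cast : ℤ → ℝ) ⊆ {x | (P - Q).IsRoot x} := by
          rintro _ ⟨n, rfl⟩; exact hroot n
        exact (Set.infinite_range_of_injective Int.cast_injective).mono hsubset
      exact sub_eq_zero.mp hsub
    have hcoeffP : P.coeff j = β j := by
      rw [hP, Polynomial.finset_sum_coeff]
      simp only [Polynomial.coeff_C_mul, Polynomial.coeff_X_pow, mul_ite, mul_one, mul_zero]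
      rw [Finset.sum_ite_eq (range (d+1)) j β]
      simp [Nat.lt_succ_iff, hj]
    have hcoeffQ : Q.coeff j
        = ∑ i ∈ range (d+1), (α i / (i.factorial:ℝ)) * ((Zp i).coeff j : ℝ) := by
      rw [hQ, Polynomial.finset_sum_coeff]
      refine Finset.sum_congr rfl fun i _ => ?_
      rw [Polynomial.coeff_C_mul, Polynomial.coeff_map]
      simp
    have hβ : β j = ∑ i ∈ range (d+1), (α i / (i.factorial:ℝ)) * ((Zp i).coeff j : ℝ) := by
      rw [← hcoeffP, hPQ, hcoeffQ]
    rw [hβ, Finset.mul_sum]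
    refine Finset.sum_congr rfl fun i hi => ?_
    have hif : i ≤ d := Nat.lt_succ_iff.mp (Finset.mem_range.mp hi)
    have hdvd : i.factorial ∣ d.factorial := Nat.factorial_dvd_factorial hif
    have hifne : ((i.factorial : ℕ) : ℝ) ≠ 0 := by
      exact_mod_cast i.factorial_pos.ne'
    have hcast : ((d.factorial / i.factorial : ℕ) : ℝ)
        = (d.factorial : ℝ) / (i.factorial : ℝ) := by
      rw [Nat.cast_div hdvd hifne]
    rw [hMdef]
    simp only [Int.cast_mul, Int.cast_natCast, hcast]
    field_simp
  refine ⟨d.factorial, d.factorial_pos, by rw [hC0]; push_cast; linarith, ?_⟩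
  intro j hj
  set S := (Finset.range (d + 1)).sup' (by simp) (fun i => (N : ℝ) ^ i * distToInt (α i))
    with hS
  have hSnn : 0 ≤ S := by
    have h0 : (N:ℝ)^0 * distToInt (α 0) ≤ S :=
      Finset.le_sup' (fun i => (N : ℝ) ^ i * distToInt (α i))
        (Finset.mem_range.mpr (Nat.succ_pos d))
    have : (0:ℝ) ≤ (N:ℝ)^0 * distToInt (α 0) :=
      mul_nonneg (by positivity) (distToInt_nonneg _)
    linarith
  have hN1 : (1:ℝ) ≤ (N:ℝ) := by exact_mod_cast hN
  have hNj : (0:ℝ) < (N:ℝ)^j := by positivity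
  have hcol : ∑ i ∈ range (d+1), |(M i j : ℝ)| ≤ C0 := by
    have h1 : ∀ i ∈ range (d+1), |(M i j : ℝ)| ≤ ∑ j' ∈ range (d+1), |(M i j' : ℝ)| := by
      intro i _
      exact Finset.single_le_sum (f := fun j' => |(M i j' : ℝ)|) (fun j' _ => abs_nonneg _)
        (Finset.mem_range.mpr (Nat.lt_succ_of_le hj))
    have h2 := Finset.sum_le_sum h1
    rw [hC0]
    linarith
  have hterm : ∀ i ∈ range (d+1),
      |(M i j : ℝ)| * distToInt (α i) ≤ |(M i j : ℝ)| * (((N:ℝ)^j)⁻¹ * S) := by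
    intro i hi
    by_cases h : j ≤ i
    · have h1 : (N:ℝ)^i * distToInt (α i) ≤ S := by
        rw [hS]; exact Finset.le_sup' (fun k => (N:ℝ)^k * distToInt (α k)) hi
      have hNi : (0:ℝ) < (N:ℝ)^i := by positivity
      have h2 : distToInt (α i) ≤ ((N:ℝ)^i)⁻¹ * S := by
        rw [show distToInt (α i) = ((N:ℝ)^i)⁻¹ * ((N:ℝ)^i * distToInt (α i)) by
          field_simp]
        gcongr
      have h3 : ((N:ℝ)^i)⁻¹ ≤ ((N:ℝ)^j)⁻¹ :=
        inv_anti₀ hNj (pow_le_pow_right₀ hN1 h)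
      have h4 : distToInt (α i) ≤ ((N:ℝ)^j)⁻¹ * S := by
        refine h2.trans ?_
        gcongr
      exact mul_le_mul_of_nonneg_left h4 (abs_nonneg _)
    · have : M i j = 0 := hMzero i j (lt_of_not_ge h)
      rw [this]
      simp only [Int.cast_zero, abs_zero, zero_mul]
      positivity
  calc distToInt (((d.factorial : ℕ) : ℝ) * β j)
      = distToInt (∑ i ∈ range (d+1), ((M i j : ℤ) : ℝ) * α i) := by rw [key j hj]
    _ ≤ ∑ i ∈ range (d+1), |((M i j : ℤ) : ℝ)| * distToInt (α i) :=
        distToInt_sum_le _ _ _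
    _ ≤ ∑ i ∈ range (d+1), |(M i j : ℝ)| * (((N:ℝ)^j)⁻¹ * S) := Finset.sum_le_sum hterm
    _ = (∑ i ∈ range (d+1), |(M i j : ℝ)|) * (((N:ℝ)^j)⁻¹ * S) := by
        rw [← Finset.sum_mul]
    _ ≤ C0 * (((N:ℝ)^j)⁻¹ * S) := by
        have hnn : 0 ≤ ((N:ℝ)^j)⁻¹ * S :=
          mul_nonneg (inv_nonneg.mpr hNj.le) hSnn
        exact mul_le_mul_of_nonneg_right hcol hnn
    _ = C0 * ((N:ℝ)^j)⁻¹ * S := by ring
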